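/- (Corollary 3.3.) Let Z ≥ 0 and let g be a positive Borel measure on [0,∞) (the spectral measure of the physical, renormalized field) such that, in case Z > 0, the ETCR sum rule g([0,∞)) = 1/Z holds. If the singularity hypothesis holds for the Källén–Lehmann functional W_g — i.e. there exist ω > 2 and a Schwartz function f on ℝ⁴ with λ^ω W_{g,λ}(f) not converging to 0 as λ → 0⁺ — then necessarily Z = 0. -/

import Mathlib

open MeasureTheory Filter Topology SchwartzMap
open scoped FourierTransform RealInnerProductSpace ENNReal

/-- The point `(p₀, p) ∈ ℝ⁴` built from a time component `p0 ∈ ℝ` and a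
space momentum `p ∈ ℝ³`. -/
noncomputable def timeSpace (p0 : ℝ) (p : EuclideanSpace ℝ (Fin 3)) :
    EuclideanSpace ℝ (Fin 4) :=
  (EuclideanSpace.equiv (Fin 4) ℝ).symm (Fin.cons p0 (EuclideanSpace.equiv (Fin 3) ℝ p))

/-- The inner Källén–Lehmann momentum integral
`∫_{ℝ³} f̂(√(|p|²+m²), p)/√(|p|²+m²) dp` at squared mass `m2 = m²`,
where `f̂ = 𝓕 f` is the Fourier transform of `f`. -/
noncomputable def KLinner (f : EuclideanSpace ℝ (Fin 4) → ℂ) (m2 : ℝ) : ℂ :=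
  ∫ p : EuclideanSpace ℝ (Fin 3),
    𝓕 f (timeSpace (Real.sqrt (‖p‖ ^ 2 + m2)) p) / (Real.sqrt (‖p‖ ^ 2 + m2) : ℂ)

/-- The Källén–Lehmann two-point functional
`W_ρ(f) = ∫_{[0,∞)} (∫_{ℝ³} f̂(√(|p|²+m²), p)/√(|p|²+m²) dp) dρ(m²)`
associated with a spectral measure `ρ` on `[0,∞)`. -/
noncomputable def KL (ρ : Measure ℝ) (f : EuclideanSpace ℝ (Fin 4) → ℂ) : ℂ :=
  ∫ m2 in Set.Ici (0 : ℝ), KLinner f m2 ∂ρ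

/-- The scaled Källén–Lehmann functional `W_{ρ,λ}(f) = λ⁻⁴ W_ρ(f(λ⁻¹ ·))`. -/
noncomputable def KLscaled (ρ : Measure ℝ) (lam : ℝ) (f : EuclideanSpace ℝ (Fin 4) → ℂ) : ℂ :=
  (lam ^ (4 : ℕ) : ℝ)⁻¹ * KL ρ (fun x => f (lam⁻¹ • x))

lemma norm_le_norm_timeSpace (a : ℝ) (p : EuclideanSpace ℝ (Fin 3)) :
    ‖p‖ ≤ ‖timeSpace a p‖ := by
  rw [EuclideanSpace.norm_eq, EuclideanSpace.norm_eq]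
  apply Real.sqrt_le_sqrt
  have : ∀ i : Fin 4, timeSpace a p i = Fin.cons (α := fun _ : Fin 4 => ℝ) a (fun j => p j) i := by
    intro i; induction i using Fin.cases <;> rfl
  simp only [this, Fin.sum_univ_succ, Fin.cons_zero, Fin.cons_succ]
  have h2 : (0:ℝ) ≤ ‖a‖^2 := sq_nonneg _
  calc ∑ i : Fin 3, ‖p i‖ ^ 2 ≤ ‖a‖^2 + ∑ i : Fin 3, ‖p i‖ ^ 2 := by linarith
  _ = _ := by
    simp [Fin.sum_univ_succ]

lemma smul_timeSpace (c a : ℝ) (p : EuclideanSpace ℝ (Fin 3)) :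
    c • timeSpace a p = timeSpace (c * a) (c • p) := by
  ext i
  induction i using Fin.cases with
  | zero => rfl
  | succ j => rfl

lemma fourier_comp_inv_smul (f : EuclideanSpace ℝ (Fin 4) → ℂ) (lam : ℝ) (hlam : 0 < lam)
    (ξ : EuclideanSpace ℝ (Fin 4)) :
    𝓕 (fun x => f (lam⁻¹ • x)) ξ = (lam ^ (4 : ℕ) : ℝ) • 𝓕 f (lam • ξ) := by
  rw [Real.fourier_eq, Real.fourier_eq]
  have h : ∀ x : EuclideanSpace ℝ (Fin 4),
      𝐞 (-⟪x, ξ⟫) • f (lam⁻¹ • x)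
        = (fun y => 𝐞 (-⟪y, lam • ξ⟫) • f y) (lam⁻¹ • x) := by
    intro x
    have : ⟪lam⁻¹ • x, lam • ξ⟫ = ⟪x, ξ⟫ := by
      rw [real_inner_smul_left, real_inner_smul_right, ← mul_assoc,
        inv_mul_cancel₀ hlam.ne', one_mul]
    simp [this]
  simp_rw [h]
  rw [MeasureTheory.Measure.integral_comp_inv_smul_of_nonneg volume
    (fun y => 𝐞 (-⟪y, lam • ξ⟫) • f y) (hR := hlam.le), finrank_euclideanSpace_fin]

lemma schwartz_decay4 (f : 𝓢(EuclideanSpace ℝ (Fin 4), ℂ)) :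
    ∃ C : ℝ, 0 ≤ C ∧ ∀ x, ‖𝓕 (⇑f) x‖ ≤ C * ((1 + ‖x‖) ^ (4 : ℕ))⁻¹ := by
  set F := SchwartzMap.fourierTransformCLM ℝ f with hF
  refine ⟨2 ^ 4 * (Finset.Iic ((4 : ℕ), (0 : ℕ))).sup
    (fun m => SchwartzMap.seminorm ℝ m.1 m.2) F, by positivity, fun x => ?_⟩
  have h := SchwartzMap.one_add_le_sup_seminorm_apply (𝕜 := ℝ) (m := ((4 : ℕ), (0 : ℕ)))
    (k := 4) (n := 0) le_rfl le_rfl F x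
  rw [norm_iteratedFDeriv_zero] at h
  have hFx : F x = 𝓕 (⇑f) x := by
    rw [hF]; rw [SchwartzMap.fourierTransformCLM_apply]; rfl
  rw [hFx] at h
  have hpos : (0:ℝ) < (1 + ‖x‖) ^ (4:ℕ) := by positivity
  rw [← div_eq_mul_inv, le_div_iff₀ hpos, mul_comm]
  exact h

lemma integrableOn_inv_norm_ball :
    IntegrableOn (fun q : EuclideanSpace ℝ (Fin 3) => ‖q‖⁻¹)
      (Metric.ball (0 : EuclideanSpace ℝ (Fin 3)) 1) := by
  constructor
  · exact (Measurable.aestronglyMeasurable (by fun_prop))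
  rw [hasFiniteIntegral_iff_norm]
  set G : ℕ → EuclideanSpace ℝ (Fin 3) → ℝ≥0∞ := fun n =>
    (Metric.closedBall (0 : EuclideanSpace ℝ (Fin 3)) ((2:ℝ)⁻¹ ^ n)).indicator
      (fun _ => (2:ℝ≥0∞) ^ (n+1)) with hG
  have key : ∀ q ∈ Metric.ball (0 : EuclideanSpace ℝ (Fin 3)) 1,
      ENNReal.ofReal ‖(‖q‖⁻¹ : ℝ)‖ ≤ ∑' n : ℕ, G n q := by
    intro q hq
    rcases eq_or_ne q 0 with rfl | hq0
    · simp
    have hqpos : (0:ℝ) < ‖q‖ := norm_pos_iff.2 hq0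
    have hqlt : ‖q‖ < 1 := by simpa using hq
    have hex : ∃ n : ℕ, (2:ℝ)⁻¹ ^ (n+1) < ‖q‖ := by
      obtain ⟨m, hm⟩ := exists_pow_lt_of_lt_one hqpos (by norm_num : (2:ℝ)⁻¹ < 1)
      exact ⟨m, lt_of_le_of_lt (pow_le_pow_of_le_one (by norm_num) (by norm_num) (by omega)) hm⟩
    set N := Nat.find hex with hN
    have h1 : (2:ℝ)⁻¹ ^ (N+1) < ‖q‖ := Nat.find_spec hex
    have h2 : ‖q‖ ≤ (2:ℝ)⁻¹ ^ N := by
      rcases Nat.eq_zero_or_pos N with h | h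
      · rw [h]; simpa using hqlt.le
      · have := Nat.find_min hex (m := N - 1) (by omega)
        push_neg at this
        simpa [Nat.sub_add_cancel h] using this
    have hmem : q ∈ Metric.closedBall (0 : EuclideanSpace ℝ (Fin 3)) ((2:ℝ)⁻¹ ^ N) :=
      mem_closedBall_zero_iff.2 h2
    calc ENNReal.ofReal ‖(‖q‖⁻¹ : ℝ)‖ ≤ ENNReal.ofReal ((2:ℝ) ^ (N+1)) := by
          apply ENNReal.ofReal_le_ofReal
          rw [Real.norm_eq_abs, abs_of_nonneg (by positivity)]
          have := inv_anti₀ (by positivity : (0:ℝ) < (2:ℝ)⁻¹ ^ (N+1)) h1.le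
          rwa [inv_pow, inv_inv] at this
      _ = (2:ℝ≥0∞) ^ (N+1) := by
          rw [ENNReal.ofReal_pow (by norm_num)]
          norm_num
      _ = G N q := by
          have : G N q = (2:ℝ≥0∞) ^ (N+1) := Set.indicator_of_mem hmem _
          rw [this]
      _ ≤ ∑' n, G n q := ENNReal.le_tsum N
  calc ∫⁻ q in Metric.ball (0 : EuclideanSpace ℝ (Fin 3)) 1, ENNReal.ofReal ‖(‖q‖⁻¹ : ℝ)‖
      ≤ ∫⁻ q in Metric.ball (0 : EuclideanSpace ℝ (Fin 3)) 1, ∑' n, G n q :=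
        setLIntegral_mono' measurableSet_ball key
    _ ≤ ∫⁻ q, ∑' n, G n q := setLIntegral_le_lintegral _ _
    _ = ∑' n, ∫⁻ q, G n q := by
        rw [lintegral_tsum]
        intro n
        exact ((measurable_const.indicator measurableSet_closedBall)).aemeasurable
    _ = ∑' n : ℕ, (2:ℝ≥0∞) ^ (n+1) *
          volume (Metric.closedBall (0 : EuclideanSpace ℝ (Fin 3)) ((2:ℝ)⁻¹ ^ n)) := by
        congr 1; ext n
        rw [hG]
        simp only
        rw [lintegral_indicator measurableSet_closedBall]
        simp
    _ < ⊤ := by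
        have hvol : ∀ n : ℕ, volume (Metric.closedBall (0 : EuclideanSpace ℝ (Fin 3)) ((2:ℝ)⁻¹ ^ n))
            = ENNReal.ofReal (((2:ℝ)⁻¹ ^ n) ^ (3:ℕ)) *
              volume (Metric.ball (0 : EuclideanSpace ℝ (Fin 3)) 1) := by
          intro n
          rw [Measure.addHaar_closedBall volume 0 (by positivity)]
          rw [finrank_euclideanSpace_fin]
        simp_rw [hvol]
        set C := volume (Metric.ball (0 : EuclideanSpace ℝ (Fin 3)) 1) with hC
        have hCfin : C < ⊤ := measure_ball_lt_top
        have hterm : ∀ n : ℕ, (2:ℝ≥0∞) ^ (n+1) * (ENNReal.ofReal (((2:ℝ)⁻¹ ^ n) ^ (3:ℕ)) * C)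
            ≤ (2 * C) * ((2:ℝ≥0∞)⁻¹) ^ n := by
          intro n
          have : ENNReal.ofReal (((2:ℝ)⁻¹ ^ n) ^ (3:ℕ)) = (((2:ℝ≥0∞)⁻¹) ^ n) ^ (3:ℕ) := by
            rw [ENNReal.ofReal_pow (by positivity), ENNReal.ofReal_pow (by norm_num)]
            rw [ENNReal.ofReal_inv_of_pos (by norm_num)]
            norm_num
          rw [this]
          have h8 : (((2:ℝ≥0∞)⁻¹) ^ n) ^ (3:ℕ) ≤ ((2:ℝ≥0∞)⁻¹) ^ n * ((2:ℝ≥0∞)⁻¹) ^ n := by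
            rw [← pow_mul, ← pow_add]
            exact pow_le_pow_right_of_le_one' (ENNReal.inv_le_one.2 one_le_two) (by omega)
          calc (2:ℝ≥0∞) ^ (n+1) * ((((2:ℝ≥0∞)⁻¹) ^ n) ^ (3:ℕ) * C)
              ≤ (2:ℝ≥0∞) ^ (n+1) * ((((2:ℝ≥0∞)⁻¹) ^ n * ((2:ℝ≥0∞)⁻¹) ^ n) * C) := by gcongr
            _ = (2 * C) * (((2:ℝ≥0∞) ^ n * ((2:ℝ≥0∞)⁻¹) ^ n) * ((2:ℝ≥0∞)⁻¹) ^ n) := by ring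
            _ = (2 * C) * ((2:ℝ≥0∞)⁻¹) ^ n := by
                rw [← mul_pow, ENNReal.mul_inv_cancel (by norm_num) (by norm_num)]
                simp
        apply lt_of_le_of_lt (ENNReal.tsum_le_tsum hterm)
        rw [ENNReal.tsum_mul_left, ENNReal.tsum_geometric]
        apply ENNReal.mul_lt_top (by finiteness)
        simp [ENNReal.sub_ne_top]

lemma integrable_B :
    Integrable (fun q : EuclideanSpace ℝ (Fin 3) => (((1+‖q‖) ^ (4:ℕ)) * ‖q‖)⁻¹) := by
  rw [← integrableOn_univ, ← Set.union_compl_self (Metric.ball (0:EuclideanSpace ℝ (Fin 3)) 1)]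
  apply IntegrableOn.union
  · apply Integrable.mono' integrableOn_inv_norm_ball
    · exact Measurable.aestronglyMeasurable (by fun_prop)
    · apply ae_of_all
      intro q
      rw [Real.norm_eq_abs, abs_of_nonneg (by positivity), mul_inv]
      calc ((1+‖q‖) ^ (4:ℕ))⁻¹ * ‖q‖⁻¹ ≤ 1 * ‖q‖⁻¹ := by
            apply mul_le_mul_of_nonneg_right _ (by positivity)
            apply inv_le_one_of_one_le₀
            apply one_le_pow₀
            linarith [norm_nonneg q]
        _ = ‖q‖⁻¹ := one_mul _
  · apply Integrable.mono'
      ((integrable_one_add_norm (E := EuclideanSpace ℝ (Fin 3)) (μ := volume) (r := 4)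
        (by rw [finrank_euclideanSpace_fin]; norm_num)).restrict
        (s := (Metric.ball (0:EuclideanSpace ℝ (Fin 3)) 1)ᶜ))
    · exact Measurable.aestronglyMeasurable (by fun_prop)
    · rw [ae_restrict_iff' measurableSet_ball.compl]
      apply ae_of_all
      intro q hq
      have hq1 : (1:ℝ) ≤ ‖q‖ := by
        simpa [Metric.mem_ball] using hq
      rw [Real.norm_eq_abs, abs_of_nonneg (by positivity), mul_inv]
      have : ((1:ℝ)+‖q‖) ^ (-(4:ℝ)) = ((1+‖q‖) ^ (4:ℕ))⁻¹ := by
        rw [Real.rpow_neg (by positivity), show ((4:ℝ)) = ((4:ℕ):ℝ) by norm_num,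
          Real.rpow_natCast]
      rw [this]
      calc ((1+‖q‖) ^ (4:ℕ))⁻¹ * ‖q‖⁻¹ ≤ ((1+‖q‖) ^ (4:ℕ))⁻¹ * 1 := by
            apply mul_le_mul_of_nonneg_left (inv_le_one_of_one_le₀ hq1) (by positivity)
        _ = _ := mul_one _

lemma KLinner_scaled_bound (f : EuclideanSpace ℝ (Fin 4) → ℂ) {C : ℝ} (hC0 : 0 ≤ C)
    (hC : ∀ x, ‖𝓕 f x‖ ≤ C * ((1 + ‖x‖) ^ (4:ℕ))⁻¹)
    {lam : ℝ} (hlam : 0 < lam) {m2 : ℝ} (hm2 : 0 ≤ m2) :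
    ‖KLinner (fun x => f (lam⁻¹ • x)) m2‖ ≤ lam ^ (2:ℕ) *
      (C * ∫ q : EuclideanSpace ℝ (Fin 3), (((1+‖q‖) ^ (4:ℕ)) * ‖q‖)⁻¹) := by
  set Breal : EuclideanSpace ℝ (Fin 3) → ℝ := fun q => (((1+‖q‖) ^ (4:ℕ)) * ‖q‖)⁻¹ with hBreal
  set D : EuclideanSpace ℝ (Fin 3) → ℝ := fun p => lam ^ (5:ℕ) * C * Breal (lam • p) with hD
  have hDint : Integrable D := ((integrable_B.comp_smul (R := lam) hlam.ne')).const_mul _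
  have h0 : ∀ᵐ (p : EuclideanSpace ℝ (Fin 3)) ∂volume, p ≠ 0 := by
    refine ae_iff.2 ?_
    simpa using measure_singleton (0 : EuclideanSpace ℝ (Fin 3))
  have hbound : ∀ᵐ (p : EuclideanSpace ℝ (Fin 3)) ∂volume,
      ‖𝓕 (fun x => f (lam⁻¹ • x)) (timeSpace (Real.sqrt (‖p‖ ^ 2 + m2)) p)
        / (Real.sqrt (‖p‖ ^ 2 + m2) : ℂ)‖ ≤ D p := by
    filter_upwards [h0] with p hp
    set s : ℝ := Real.sqrt (‖p‖ ^ 2 + m2) with hs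
    have hpnorm : (0:ℝ) < ‖p‖ := norm_pos_iff.2 hp
    have hsge : ‖p‖ ≤ s := by
      rw [hs]
      calc ‖p‖ = Real.sqrt (‖p‖ ^ 2) := (Real.sqrt_sq (norm_nonneg p)).symm
        _ ≤ _ := Real.sqrt_le_sqrt (by linarith)
    have hspos : 0 < s := lt_of_lt_of_le hpnorm hsge
    rw [norm_div, fourier_comp_inv_smul f lam hlam, norm_smul]
    have hXnorm : lam * ‖p‖ ≤ ‖lam • timeSpace s p‖ := by
      rw [norm_smul, Real.norm_eq_abs, abs_of_pos hlam]
      exact mul_le_mul_of_nonneg_left (norm_le_norm_timeSpace s p) hlam.le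
    have hdecay : ‖𝓕 f (lam • timeSpace s p)‖ ≤ C * ((1 + lam * ‖p‖) ^ (4:ℕ))⁻¹ := by
      refine (hC _).trans ?_
      apply mul_le_mul_of_nonneg_left _ hC0
      apply inv_anti₀ (by positivity)
      gcongr
    have hnorms : ‖(s : ℂ)‖ = s := by
      rw [Complex.norm_real, Real.norm_eq_abs, abs_of_pos hspos]
    have hDp : D p = (lam ^ (4:ℕ) * (C * ((1 + lam * ‖p‖) ^ (4:ℕ))⁻¹)) * ‖p‖⁻¹ := by
      rw [hD, hBreal]
      simp only
      rw [norm_smul, Real.norm_eq_abs, abs_of_pos hlam]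
      rw [mul_inv]
      field_simp
    rw [hDp]
    have h1 : ‖(lam ^ (4:ℕ) : ℝ)‖ * ‖𝓕 f (lam • timeSpace s p)‖
        ≤ lam ^ (4:ℕ) * (C * ((1 + lam * ‖p‖) ^ (4:ℕ))⁻¹) := by
      rw [Real.norm_eq_abs, abs_of_pos (by positivity)]
      exact mul_le_mul_of_nonneg_left hdecay (by positivity)
    rw [hnorms]
    rw [div_eq_mul_inv]
    apply mul_le_mul h1 _ (by positivity) _
    · exact inv_anti₀ hpnorm hsge
    · positivity
  calc ‖KLinner (fun x => f (lam⁻¹ • x)) m2‖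
      ≤ ∫ p : EuclideanSpace ℝ (Fin 3),
          ‖𝓕 (fun x => f (lam⁻¹ • x)) (timeSpace (Real.sqrt (‖p‖ ^ 2 + m2)) p)
            / (Real.sqrt (‖p‖ ^ 2 + m2) : ℂ)‖ := norm_integral_le_integral_norm _
    _ ≤ ∫ p, D p := integral_mono_of_nonneg (ae_of_all _ fun p => norm_nonneg _) hDint hbound
    _ = lam ^ (5:ℕ) * C * ∫ p, Breal (lam • p) := by
        rw [hD]
        exact MeasureTheory.integral_const_mul _ _
    _ = lam ^ (5:ℕ) * C * ((lam ^ (3:ℕ))⁻¹ * ∫ q, Breal q) := by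
        rw [MeasureTheory.Measure.integral_comp_smul_of_nonneg volume Breal lam (hR := hlam.le),
          finrank_euclideanSpace_fin, smul_eq_mul]
    _ = lam ^ (2:ℕ) * (C * ∫ q, Breal q) := by
        field_simp

/-- Corollary 3.3: Let `Z ≥ 0` and let `g` be the spectral measure of the
physical (renormalized) field, satisfying the ETCR sum rule `g([0,∞)) = 1/Z` whenever
`Z > 0`. If the singularity hypothesis holds for `W_g`, i.e. there exist `ω > 2` and a
Schwartz `f` on ℝ⁴ such that `λ^ω W_{g,λ}(f)` does not tend to `0` as `λ → 0⁺`, then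
necessarily `Z = 0`. -/
theorem singularity_forces_Z_zero (Z : ℝ) (hZ : 0 ≤ Z) (g : Measure ℝ)
    (hsum : 0 < Z → g (Set.Ici (0 : ℝ)) = ENNReal.ofReal (1 / Z))
    (hsing : ∃ ω : ℝ, 2 < ω ∧ ∃ f : 𝓢(EuclideanSpace ℝ (Fin 4), ℂ),
      ¬ Tendsto (fun lam : ℝ => ((lam ^ ω : ℝ) : ℂ) * KLscaled g lam ⇑f)
          (𝓝[>] (0 : ℝ)) (𝓝 0)) :
    Z = 0 := by
  by_contra hne
  have hZpos : 0 < Z := lt_of_le_of_ne hZ (Ne.symm hne)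
  obtain ⟨ω, hω, f, hf⟩ := hsing
  apply hf
  have hfin : g (Set.Ici (0:ℝ)) ≠ ⊤ := by
    rw [hsum hZpos]; exact ENNReal.ofReal_ne_top
  have hν : IsFiniteMeasure (g.restrict (Set.Ici (0:ℝ))) := by
    constructor
    rw [Measure.restrict_apply_univ]
    exact lt_of_le_of_ne le_top hfin
  set M : ℝ := (g (Set.Ici (0:ℝ))).toReal with hM
  have hM0 : 0 ≤ M := ENNReal.toReal_nonneg
  obtain ⟨C, hC0, hC⟩ := schwartz_decay4 f
  set B : ℝ := ∫ q : EuclideanSpace ℝ (Fin 3), (((1+‖q‖) ^ (4:ℕ)) * ‖q‖)⁻¹ with hB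
  have hB0 : 0 ≤ B := integral_nonneg fun q => by positivity
  set K : ℝ := C * B * M with hK
  have hbound : ∀ lam : ℝ, lam ∈ Set.Ioi (0:ℝ) →
      ‖((lam ^ ω : ℝ) : ℂ) * KLscaled g lam ⇑f‖ ≤ lam ^ (ω - 2) * K := by
    intro lam hlam
    rw [Set.mem_Ioi] at hlam
    have hKL : ‖KL g (fun x => f (lam⁻¹ • x))‖ ≤ M * (lam ^ (2:ℕ) * (C * B)) := by
      calc ‖KL g (fun x => f (lam⁻¹ • x))‖
          ≤ ∫ m2 in Set.Ici (0:ℝ), ‖KLinner (fun x => f (lam⁻¹ • x)) m2‖ ∂g :=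
            norm_integral_le_integral_norm _
        _ ≤ ∫ _m2 in Set.Ici (0:ℝ), lam ^ (2:ℕ) * (C * B) ∂g := by
            apply integral_mono_of_nonneg (ae_of_all _ fun m2 => norm_nonneg _)
              (integrable_const _)
            filter_upwards [ae_restrict_mem measurableSet_Ici] with m2 hm2
            exact KLinner_scaled_bound (⇑f) hC0 hC hlam hm2
        _ = M * (lam ^ (2:ℕ) * (C * B)) := by
            rw [integral_const, measureReal_restrict_apply_univ, measureReal_def, smul_eq_mul]
    have hnorm : ‖((lam ^ ω : ℝ) : ℂ) * KLscaled g lam ⇑f‖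
        = lam ^ ω * ((lam ^ (4:ℕ))⁻¹ * ‖KL g (fun x => f (lam⁻¹ • x))‖) := by
      rw [KLscaled, norm_mul, norm_mul, Complex.norm_real, Complex.norm_real,
        Real.norm_eq_abs, Real.norm_eq_abs, abs_of_pos (Real.rpow_pos_of_pos hlam ω),
        abs_of_pos (by positivity : (0:ℝ) < (lam ^ (4:ℕ))⁻¹)]
    rw [hnorm]
    calc lam ^ ω * ((lam ^ (4:ℕ))⁻¹ * ‖KL g (fun x => f (lam⁻¹ • x))‖)
        ≤ lam ^ ω * ((lam ^ (4:ℕ))⁻¹ * (M * (lam ^ (2:ℕ) * (C * B)))) := by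
          apply mul_le_mul_of_nonneg_left _ (Real.rpow_nonneg hlam.le ω)
          exact mul_le_mul_of_nonneg_left hKL (by positivity)
      _ = lam ^ (ω - 2) * K := by
          rw [hK]
          have h4 : (lam ^ (4:ℕ) : ℝ) = lam ^ ((4:ℕ):ℝ) := (Real.rpow_natCast lam 4).symm
          have h2 : (lam ^ (2:ℕ) : ℝ) = lam ^ ((2:ℕ):ℝ) := (Real.rpow_natCast lam 2).symm
          rw [h4, h2, ← Real.rpow_neg hlam.le]
          have key : lam ^ (ω - 2) = lam ^ ω * (lam ^ (-((4:ℕ):ℝ)) * lam ^ ((2:ℕ):ℝ)) := by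
            rw [← Real.rpow_add hlam, ← Real.rpow_add hlam]
            norm_num
            rw [sub_eq_add_neg]
          rw [key]
          ring
  have htend : Tendsto (fun lam : ℝ => lam ^ (ω - 2) * K) (𝓝[>] (0:ℝ)) (𝓝 0) := by
    have h1 : Tendsto (fun lam : ℝ => lam ^ (ω - 2)) (𝓝 (0:ℝ)) (𝓝 0) := by
      have := (Real.continuousAt_rpow_const 0 (ω - 2) (Or.inr (by linarith))).tendsto
      rwa [Real.zero_rpow (by linarith : ω - 2 ≠ 0)] at this
    simpa using ((h1.mono_left nhdsWithin_le_nhds).mul_const K)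
  exact squeeze_zero_norm' (eventually_nhdsWithin_of_forall hbound) htend
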